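/- For every positive integer n, the double sum over all integers i, j with -n ≤ i, j ≤ n of C(2n, n+i) · C(2n, n+j) · |i² - j²| equals 2n² · C(2n, n)². -/

import Mathlib

/-- Binomial coefficient with integer lower index, zero when out of range. -/
def C (m : ℕ) (k : ℤ) : ℕ := if k < 0 then 0 else m.choose k.toNat

namespace BO

open Finset

/-- row 2n of Pascal, integer valued -/
def f (n k : ℕ) : ℤ := ((2 * n).choose k : ℤ)
/-- weight -/
def w (n k : ℕ) : ℤ := ((k : ℤ) - n) ^ 2
/-- row 2n-1, shifted to start at n -/
def p (n t : ℕ) : ℤ := ((2 * n - 1).choose (n + t) : ℤ)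
/-- row 2n-1, unshifted -/
def r (n j : ℕ) : ℤ := ((2 * n - 1).choose j : ℤ)
def q (n t : ℕ) : ℤ := f n (n + t + 1)
/-- tail sums -/
def E (n t : ℕ) : ℤ := ∑ k ∈ range (2 * n + 1), f n k * (if n + t + 1 ≤ k then 1 else 0)

lemma f_zero {n k : ℕ} (h : 2 * n < k) : f n k = 0 := by
  simp [f, Nat.choose_eq_zero_of_lt h]

lemma p_top (n : ℕ) (hn : 0 < n) : p n n = 0 := by
  simp only [p]
  rw [Nat.choose_eq_zero_of_lt (by omega)]
  rfl

/-- key telescoping identity in k-coordinates -/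
lemma T1k (n : ℕ) (hn : 0 < n) (j : ℕ) :
    ((j : ℤ) + 1 - n) * f n (j + 1) = n * (r n j - r n (j + 1)) := by
  obtain ⟨m, rfl⟩ : ∃ m, n = m + 1 := ⟨n - 1, by omega⟩
  have h2 : 2 * (m + 1) = (2 * m + 1) + 1 := by ring
  have h1 : 2 * (m + 1) - 1 = 2 * m + 1 := by omega
  have hs := Nat.add_one_mul_choose_eq (2 * m + 1) j
  have hp : (2 * m + 1 + 1).choose (j + 1) = (2 * m + 1).choose j + (2 * m + 1).choose (j + 1) :=
    Nat.choose_succ_succ' _ _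
  simp only [f, r, h1, h2, Nat.succ_eq_add_one] at *
  have hs' : ((2 * m + 1 + 1 : ℕ) : ℤ) * ((2 * m + 1).choose j : ℤ)
      = ((2 * m + 1 + 1).choose (j + 1) : ℤ) * ((j : ℤ) + 1) := by
    exact_mod_cast congrArg (Nat.cast (R := ℤ)) hs
  have hp' : ((2 * m + 1 + 1).choose (j + 1) : ℤ)
      = ((2 * m + 1).choose j : ℤ) + ((2 * m + 1).choose (j + 1) : ℤ) := by
    exact_mod_cast congrArg (Nat.cast (R := ℤ)) hp
  push_cast at *
  nlinarith [hs', hp']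

lemma T1 (n : ℕ) (hn : 0 < n) (t : ℕ) :
    ((t : ℤ) + 1) * q n t = n * (p n t - p n (t + 1)) := by
  have h := T1k n hn (n + t)
  rw [show ((n + t : ℕ) : ℤ) + 1 - n = (t : ℤ) + 1 by push_cast; ring] at h
  simp only [q, f, p, r] at h ⊢
  rw [show n + (t + 1) = n + t + 1 from by omega]
  exact h

lemma E_succ (n t : ℕ) : E n t = E n (t + 1) + q n t := by
  have h : E n t = E n (t + 1) + ∑ k ∈ range (2 * n + 1), (if k = n + t + 1 then f n k else 0) := by
    rw [E, E, ← Finset.sum_add_distrib]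
    apply Finset.sum_congr rfl
    intro k hk
    by_cases hke : k = n + t + 1
    · subst hke
      rw [if_pos le_rfl, if_neg (by omega), if_pos rfl]; ring
    · rw [if_neg hke]
      by_cases h1 : n + t + 1 ≤ k
      · rw [if_pos h1, if_pos (by omega)]; ring
      · rw [if_neg h1, if_neg (by omega)]; ring
  rw [h, Finset.sum_ite_eq' (range (2 * n + 1)) (n + t + 1) (f n)]
  by_cases hmem : n + t + 1 ∈ range (2 * n + 1)
  · rw [if_pos hmem]; rfl
  · rw [if_neg hmem]
    have : f n (n + t + 1) = 0 := f_zero (by simp [Finset.mem_range] at hmem; omega)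
    simp [q, this]

lemma E_top (n : ℕ) : E n n = 0 := by
  apply Finset.sum_eq_zero
  intro k hk
  rw [if_neg (by simp [Finset.mem_range] at hk; omega)]
  ring

/-- Abel summation -/
lemma abel1 (u : ℕ → ℤ) (m : ℕ) :
    ∑ t ∈ range m, (2 * (t : ℤ) + 1) * u t
      = ∑ t ∈ range m, ((t : ℤ) + 1) ^ 2 * (u t - u (t + 1)) + (m : ℤ) ^ 2 * u m := by
  induction m with
  | zero => simp
  | succ m ih => rw [Finset.sum_range_succ, Finset.sum_range_succ (f := fun t => ((t:ℤ)+1)^2 * (u t - u (t+1))), ih]; push_cast; ring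

lemma sum_odd (m : ℕ) : ∑ t ∈ range m, (2 * (t : ℤ) + 1) = (m : ℤ) ^ 2 := by
  induction m with
  | zero => simp
  | succ m ih => rw [Finset.sum_range_succ, ih]; push_cast; ring

lemma sum_odds (m N : ℕ) (h : m ≤ N) :
    ∑ t ∈ range N, (2 * (t : ℤ) + 1) * (if t < m then 1 else 0) = (m : ℤ) ^ 2 := by
  rw [← Finset.sum_subset (Finset.range_subset_range.mpr h)
    (by intro x hx hnx; simp [Finset.mem_range] at hnx; rw [if_neg (by omega)]; ring)]
  rw [← sum_odd m]
  apply Finset.sum_congr rfl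
  intro t ht
  rw [if_pos (Finset.mem_range.mp ht)]; ring

lemma Gval (n : ℕ) (hn : 0 < n) :
    ∑ t ∈ range n, (2 * n - 1).choose (n + t) = 4 ^ (n - 1) := by
  obtain ⟨m, rfl⟩ : ∃ m, n = m + 1 := ⟨n - 1, by omega⟩
  have h1 : 2 * (m + 1) - 1 = 2 * m + 1 := by omega
  simp only [h1, Nat.add_sub_cancel]
  have step : ∀ t ∈ range (m + 1),
      (2 * m + 1).choose (m + 1 + t) = (fun j => (2 * m + 1).choose j) (m + 1 - 1 - t) := by
    intro t ht
    simp only [Finset.mem_range] at ht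
    have : m + 1 - 1 - t = (2 * m + 1) - (m + 1 + t) := by omega
    rw [this]
    exact (Nat.choose_symm (by omega)).symm
  rw [Finset.sum_congr rfl step, Finset.sum_range_reflect (fun j => (2 * m + 1).choose j) (m + 1)]
  exact Nat.sum_range_choose_halfway m

lemma fsum (n : ℕ) : ∑ k ∈ range (2 * n + 1), f n k = (4 : ℤ) ^ n := by
  simp only [f]
  rw [← Nat.cast_sum, Nat.sum_range_choose (2 * n)]
  push_cast
  rw [pow_mul]
  norm_num

lemma central (n : ℕ) (hn : 0 < n) : (2 * n).choose n = 2 * (2 * n - 1).choose n := by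
  obtain ⟨m, rfl⟩ : ∃ m, n = m + 1 := ⟨n - 1, by omega⟩
  have h1 : 2 * (m + 1) - 1 = 2 * m + 1 := by omega
  have h2 : 2 * (m + 1) = (2 * m + 1) + 1 := by ring
  rw [h1, h2, show m + 1 = m + 1 from rfl, Nat.choose_succ_succ' (2 * m + 1) m]
  have : (2 * m + 1).choose m = (2 * m + 1).choose (m + 1) := by
    rw [← Nat.choose_symm (show m + 1 ≤ 2 * m + 1 by omega)]
    congr 1; omega
  omega

lemma E_eq (n t : ℕ) :
    E n t = ∑ i ∈ range (n + 1), f n (n + i) * (if t + 1 ≤ i then 1 else 0) := by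
  rw [E, show 2 * n + 1 = n + (n + 1) from by ring, Finset.sum_range_add]
  have h0 : ∑ k ∈ range n, f n k * (if n + t + 1 ≤ k then 1 else 0) = 0 := by
    apply Finset.sum_eq_zero
    intro k hk
    rw [if_neg (by simp [Finset.mem_range] at hk; omega)]; ring
  rw [h0, zero_add]
  apply Finset.sum_congr rfl
  intro i _
  congr 1
  by_cases h : t + 1 ≤ i
  · rw [if_pos (by omega), if_pos h]
  · rw [if_neg (by omega), if_neg h]

lemma pascal_p (n : ℕ) (hn : 0 < n) (i : ℕ) : f n (n + (i + 1)) = p n i + p n (i + 1) := by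
  obtain ⟨m, rfl⟩ : ∃ m, n = m + 1 := ⟨n - 1, by omega⟩
  have h1 : 2 * (m + 1) - 1 = 2 * m + 1 := by omega
  have h2 : 2 * (m + 1) = (2 * m + 1) + 1 := by ring
  simp only [f, p, h1, h2]
  rw [show m + 1 + (i + 1) = (m + 1 + i) + 1 from by omega,
    Nat.choose_succ_succ' (2 * m + 1) (m + 1 + i)]
  push_cast
  ring

lemma Psi (n : ℕ) (hn : 0 < n) :
    ∑ t ∈ range (n + 1), p n t * E n t = ((4 : ℤ) ^ (n - 1)) ^ 2 := by
  have key : ∀ t ∈ range (n + 1), p n t * E n t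
      = (∑ i ∈ range n, p n t * p n i * (if t ≤ i then 1 else 0))
      + (∑ i ∈ range n, p n t * p n i * (if i < t then 1 else 0))
      + (∑ i ∈ range n, p n t * p n i * (if t < i then 1 else 0))
      - (∑ i ∈ range n, p n t * p n i * (if i < t then 1 else 0)) := by
    intro t _
    rw [E_eq, Finset.mul_sum, Finset.sum_range_succ']
    rw [if_neg (by omega : ¬ t + 1 ≤ 0)]
    have step : ∀ i ∈ range n, p n t * (f n (n + (i + 1)) * (if t + 1 ≤ i + 1 then 1 else 0))
        = p n t * p n i * (if t ≤ i then 1 else 0)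
          + p n t * p n (i + 1) * (if t ≤ i then 1 else 0) := by
      intro i _
      rw [pascal_p n hn i]
      by_cases h : t ≤ i
      · rw [if_pos (by omega), if_pos h]; ring
      · rw [if_neg (by omega), if_neg h]; ring
    rw [Finset.sum_congr rfl step, Finset.sum_add_distrib]
    have hB : ∑ i ∈ range n, p n t * p n (i + 1) * (if t ≤ i then 1 else 0)
        = ∑ i ∈ range n, p n t * p n i * (if t < i then 1 else 0) := by
      have h1 : ∑ i ∈ range (n + 1), p n t * p n i * (if t < i then 1 else 0)
          = ∑ i ∈ range n, p n t * p n (i + 1) * (if t ≤ i then 1 else 0) := by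
        rw [Finset.sum_range_succ']
        rw [if_neg (by omega : ¬ t < 0)]
        have : ∀ i ∈ range n, p n t * p n (i + 1) * (if t < i + 1 then 1 else 0)
            = p n t * p n (i + 1) * (if t ≤ i then 1 else 0) := by
          intro i _
          by_cases h : t ≤ i
          · rw [if_pos (by omega), if_pos h]
          · rw [if_neg (by omega), if_neg h]
        rw [Finset.sum_congr rfl this]
        ring
      have h2 : ∑ i ∈ range (n + 1), p n t * p n i * (if t < i then 1 else 0)
          = ∑ i ∈ range n, p n t * p n i * (if t < i then 1 else 0) := by
        rw [Finset.sum_range_succ, p_top n hn]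
        simp
      rw [← h1, h2]
    rw [hB]
    ring
  rw [Finset.sum_congr rfl key]
  simp only [Finset.sum_add_distrib, Finset.sum_sub_distrib]
  have swap : ∑ t ∈ range n, ∑ i ∈ range n, p n t * p n i * (if t < i then 1 else 0)
      = ∑ t ∈ range n, ∑ i ∈ range n, p n t * p n i * (if i < t then 1 else 0) := by
    rw [Finset.sum_comm]
    apply Finset.sum_congr rfl
    intro t _
    apply Finset.sum_congr rfl
    intro i _
    ring
  have hA : ∑ t ∈ range (n + 1), ∑ i ∈ range n, p n t * p n i * (if t ≤ i then 1 else 0)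
      = ∑ t ∈ range n, ∑ i ∈ range n, p n t * p n i * (if t ≤ i then 1 else 0) := by
    rw [Finset.sum_range_succ]
    simp [p_top n hn]
  have hC : ∑ t ∈ range (n + 1), ∑ i ∈ range n, p n t * p n i * (if t < i then 1 else 0)
      = ∑ t ∈ range n, ∑ i ∈ range n, p n t * p n i * (if t < i then 1 else 0) := by
    rw [Finset.sum_range_succ]
    simp [p_top n hn]
  rw [hA, hC, swap]
  have comb : ∑ t ∈ range n, ∑ i ∈ range n, p n t * p n i * (if t ≤ i then 1 else 0)
      + ∑ t ∈ range n, ∑ i ∈ range n, p n t * p n i * (if i < t then 1 else 0)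
      = ∑ t ∈ range n, ∑ i ∈ range n, p n t * p n i := by
    rw [← Finset.sum_add_distrib]
    apply Finset.sum_congr rfl
    intro t _
    rw [← Finset.sum_add_distrib]
    apply Finset.sum_congr rfl
    intro i _
    by_cases h : t ≤ i
    · rw [if_pos h, if_neg (by omega)]; ring
    · rw [if_neg h, if_pos (by omega)]; ring
  have hG : ∑ t ∈ range n, p n t = (4 : ℤ) ^ (n - 1) := by
    simp only [p]
    rw [← Nat.cast_sum, Gval n hn]
    push_cast
    ring
  calc (∑ t ∈ range n, ∑ i ∈ range n, p n t * p n i * (if t ≤ i then 1 else 0))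
        + (∑ t ∈ range (n + 1), ∑ i ∈ range n, p n t * p n i * (if i < t then 1 else 0))
        + (∑ t ∈ range n, ∑ i ∈ range n, p n t * p n i * (if i < t then 1 else 0))
        - (∑ t ∈ range (n + 1), ∑ i ∈ range n, p n t * p n i * (if i < t then 1 else 0))
      = (∑ t ∈ range n, ∑ i ∈ range n, p n t * p n i * (if t ≤ i then 1 else 0))
        + (∑ t ∈ range n, ∑ i ∈ range n, p n t * p n i * (if i < t then 1 else 0)) := by ring
    _ = ∑ t ∈ range n, ∑ i ∈ range n, p n t * p n i := comb
    _ = (∑ t ∈ range n, p n t) * (∑ i ∈ range n, p n i) := by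
          rw [Finset.sum_mul_sum]
    _ = ((4 : ℤ) ^ (n - 1)) ^ 2 := by rw [hG]; ring

lemma Phi (n : ℕ) (hn : 0 < n) :
    ∑ t ∈ range n, ((t : ℤ) + 1) * (p n t - p n (t + 1)) * E n t
      = (∑ t ∈ range (n + 1), p n t * E n t)
        - n * ∑ t ∈ range n, p n (t + 1) * (p n t - p n (t + 1)) := by
  have step : ∀ t ∈ range n, ((t : ℤ) + 1) * (p n t - p n (t + 1)) * E n t
      = (((t : ℤ) + 1) * p n t * E n t - (((t + 1 : ℕ) : ℤ) + 1) * p n (t + 1) * E n (t + 1))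
        + (p n (t + 1) * E n (t + 1) - (n : ℤ) * (p n (t + 1) * (p n t - p n (t + 1)))) := by
    intro t _
    have hE := E_succ n t
    have hT := T1 n hn t
    push_cast
    linear_combination (-((t : ℤ) + 1) * p n (t + 1)) * hE + (- p n (t + 1)) * hT
  rw [Finset.sum_congr rfl step, Finset.sum_add_distrib,
    Finset.sum_range_sub' (fun s => ((s : ℤ) + 1) * p n s * E n s) n,
    Finset.sum_sub_distrib, ← Finset.mul_sum]
  have hh : ∑ t ∈ range (n + 1), p n t * E n t
      = (∑ t ∈ range n, p n (t + 1) * E n (t + 1)) + p n 0 * E n 0 :=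
    Finset.sum_range_succ' (fun t => p n t * E n t) n
  rw [hh, p_top n hn]
  push_cast
  ring

lemma Xval (n : ℕ) (hn : 0 < n) :
    ∑ t ∈ range n, (2 * (t : ℤ) + 1) * (E n t) ^ 2
      = 2 * n * ((4 : ℤ) ^ (n - 1)) ^ 2 - (n : ℤ) ^ 2 * (p n 0) ^ 2 := by
  rw [abel1 (fun t => (E n t) ^ 2) n]
  have hE0 : (E n n) ^ 2 = 0 := by rw [E_top n]; ring
  rw [hE0]
  have step : ∀ t ∈ range n, ((t : ℤ) + 1) ^ 2 * ((E n t) ^ 2 - (E n (t + 1)) ^ 2)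
      = 2 * (n : ℤ) * (((t : ℤ) + 1) * (p n t - p n (t + 1)) * E n t)
        - ((n : ℤ) * (p n t - p n (t + 1))) ^ 2 := by
    intro t _
    have hE := E_succ n t
    have hT := T1 n hn t
    linear_combination (((t : ℤ) + 1) ^ 2 * (E n t + E n (t + 1) - q n t)) * hE
      + (2 * ((t : ℤ) + 1) * (E n t) - 2 * ((t : ℤ) + 1) * (q n t)
          + (((t : ℤ) + 1) * (q n t) - (n : ℤ) * (p n t - p n (t + 1)))) * hT
  rw [Finset.sum_congr rfl step, Finset.sum_sub_distrib, ← Finset.mul_sum, Phi n hn, Psi n hn]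
  have tele : ∑ t ∈ range n, ((p n t) ^ 2 - (p n (t + 1)) ^ 2) = (p n 0) ^ 2 := by
    rw [Finset.sum_range_sub' (fun t => (p n t) ^ 2) n, p_top n hn]
    ring
  have key2 : ∑ t ∈ range n, (p n t - p n (t + 1)) ^ 2
      = (p n 0) ^ 2 - 2 * ∑ t ∈ range n, p n (t + 1) * (p n t - p n (t + 1)) := by
    have pt : ∀ t ∈ range n, (p n t - p n (t + 1)) ^ 2
        = ((p n t) ^ 2 - (p n (t + 1)) ^ 2) - 2 * (p n (t + 1) * (p n t - p n (t + 1))) := by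
      intro t _
      ring
    rw [Finset.sum_congr rfl pt, Finset.sum_sub_distrib, tele, ← Finset.mul_sum]
  have pull : ∑ t ∈ range n, ((n : ℤ) * (p n t - p n (t + 1))) ^ 2
      = (n : ℤ) ^ 2 * ∑ t ∈ range n, (p n t - p n (t + 1)) ^ 2 := by
    rw [Finset.mul_sum]
    apply Finset.sum_congr rfl
    intro t _
    ring
  rw [pull, key2]
  ring

lemma fw (n : ℕ) (hn : 0 < n) :
    (∑ k ∈ range (2 * n + 1), f n k * w n k) * 2 = (n : ℤ) * 4 ^ n := by
  have peel : ∑ k ∈ range (2 * n + 1), f n k * w n k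
      = (∑ j ∈ range (2 * n), f n (j + 1) * w n (j + 1)) + f n 0 * w n 0 :=
    Finset.sum_range_succ' (fun k => f n k * w n k) (2 * n)
  have step : ∀ j ∈ range (2 * n), f n (j + 1) * w n (j + 1)
      = (n : ℤ) * (((j : ℤ) - n) * r n j - (((j + 1 : ℕ) : ℤ) - n) * r n (j + 1))
        + (n : ℤ) * r n j := by
    intro j _
    have hT := T1k n hn j
    simp only [w]
    push_cast
    linear_combination ((j : ℤ) + 1 - (n : ℤ)) * hT
  rw [peel, Finset.sum_congr rfl step, Finset.sum_add_distrib, ← Finset.mul_sum, ← Finset.mul_sum,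
    Finset.sum_range_sub' (fun j => ((j : ℤ) - n) * r n j) (2 * n)]
  have hr0 : r n 0 = 1 := by simp [r]
  have hrt : r n (2 * n) = 0 := by
    simp only [r]
    rw [Nat.choose_eq_zero_of_lt (by omega)]
    norm_num
  have hrs : ∑ j ∈ range (2 * n), r n j = 2 ^ (2 * n - 1) := by
    obtain ⟨m, hm⟩ : ∃ m, 2 * n = m + 1 := ⟨2 * n - 1, by omega⟩
    simp only [r]
    rw [hm, show m + 1 - 1 = m from rfl, ← Nat.cast_sum, Nat.sum_range_choose m]
    push_cast
    try ring
  have hf0 : f n 0 = 1 := by simp [f]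
  have hw0 : w n 0 = (n : ℤ) ^ 2 := by simp [w]
  rw [hr0, hrt, hrs, hf0, hw0]
  have h2 : (2 : ℤ) ^ (2 * n - 1) * 2 = 4 ^ n := by
    rw [← pow_succ, show 2 * n - 1 + 1 = 2 * n from by omega, pow_mul]
    norm_num
  push_cast
  linear_combination (n : ℤ) * h2

lemma half (n t : ℕ) :
    ∑ k ∈ range (2 * n + 1), f n k * (if k + t + 1 ≤ n ∨ n + t + 1 ≤ k then 1 else 0)
      = 2 * E n t := by
  have split : ∀ k ∈ range (2 * n + 1),
      f n k * (if k + t + 1 ≤ n ∨ n + t + 1 ≤ k then 1 else 0)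
      = f n k * (if k + t + 1 ≤ n then 1 else 0) + f n k * (if n + t + 1 ≤ k then 1 else 0) := by
    intro k _
    by_cases h1 : k + t + 1 ≤ n
    · rw [if_pos (Or.inl h1), if_pos h1, if_neg (by omega)]; ring
    · by_cases h2 : n + t + 1 ≤ k
      · rw [if_pos (Or.inr h2), if_neg h1, if_pos h2]; ring
      · rw [if_neg (by tauto), if_neg h1, if_neg h2]; ring
  rw [Finset.sum_congr rfl split, Finset.sum_add_distrib]
  have hrefl : ∑ k ∈ range (2 * n + 1), f n k * (if k + t + 1 ≤ n then 1 else 0) = E n t := by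
    rw [E, ← Finset.sum_range_reflect (fun k => f n k * (if k + t + 1 ≤ n then 1 else 0)) (2 * n + 1)]
    apply Finset.sum_congr rfl
    intro k hk
    simp only [Finset.mem_range] at hk
    have hk' : 2 * n + 1 - 1 - k = 2 * n - k := by omega
    rw [hk']
    have hf : f n (2 * n - k) = f n k := by
      simp only [f]
      rw [Nat.choose_symm (by omega)]
    rw [hf]
    congr 1
    by_cases h : n + t + 1 ≤ k
    · rw [if_pos (by omega), if_pos h]
    · rw [if_neg (by omega), if_neg h]
  rw [hrefl]
  rw [E]
  ring

lemma min_decomp (n k l : ℕ) (hn : 0 < n) (hk : k < 2 * n + 1) (hl : l < 2 * n + 1) :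
    min (w n k) (w n l) = ∑ t ∈ range n, (2 * (t : ℤ) + 1) *
      ((if k + t + 1 ≤ n ∨ n + t + 1 ≤ k then 1 else 0)
        * (if l + t + 1 ≤ n ∨ n + t + 1 ≤ l then 1 else 0)) := by
  set a : ℕ := if k ≤ n then n - k else k - n with ha
  set b : ℕ := if l ≤ n then n - l else l - n with hb
  have hwk : w n k = ((a : ℤ)) ^ 2 := by
    simp only [w, ha]
    split_ifs with h
    · rw [Nat.cast_sub h]; ring
    · rw [Nat.cast_sub (by omega)]
  have hwl : w n l = ((b : ℤ)) ^ 2 := by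
    simp only [w, hb]
    split_ifs with h
    · rw [Nat.cast_sub h]; ring
    · rw [Nat.cast_sub (by omega)]
  have hka : ∀ t : ℕ, (k + t + 1 ≤ n ∨ n + t + 1 ≤ k) ↔ t < a := by
    intro t; rw [ha]; split_ifs with h <;> omega
  have hlb : ∀ t : ℕ, (l + t + 1 ≤ n ∨ n + t + 1 ≤ l) ↔ t < b := by
    intro t; rw [hb]; split_ifs with h <;> omega
  have hmin : min (w n k) (w n l) = ((min a b : ℕ) : ℤ) ^ 2 := by
    rw [hwk, hwl]
    rcases le_total a b with h | h
    · rw [min_eq_left (pow_le_pow_left₀ (by positivity) (by exact_mod_cast h) 2),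
        min_eq_left h]
    · rw [min_eq_right (pow_le_pow_left₀ (by positivity) (by exact_mod_cast h) 2),
        min_eq_right h]
  rw [hmin]
  have hstep : ∀ t ∈ range n, (2 * (t : ℤ) + 1) *
      ((if k + t + 1 ≤ n ∨ n + t + 1 ≤ k then (1:ℤ) else 0)
        * (if l + t + 1 ≤ n ∨ n + t + 1 ≤ l then (1:ℤ) else 0))
      = (2 * (t : ℤ) + 1) * (if t < min a b then 1 else 0) := by
    intro t _
    congr 1
    by_cases h1 : t < a
    · by_cases h2 : t < b
      · rw [if_pos ((hka t).mpr h1), if_pos ((hlb t).mpr h2), if_pos (lt_min h1 h2)]; ring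
      · rw [if_pos ((hka t).mpr h1), if_neg (fun hc => h2 ((hlb t).mp hc)),
          if_neg (fun hc => h2 (lt_min_iff.mp hc).2)]; ring
    · rw [if_neg (fun hc => h1 ((hka t).mp hc)),
        if_neg (fun hc => h1 (lt_min_iff.mp hc).1)]; ring
  rw [Finset.sum_congr rfl hstep]
  have hab : min a b ≤ n := by
    have : a ≤ n := by rw [ha]; split_ifs <;> omega
    omega
  exact (sum_odds (min a b) n hab).symm

end BO




theorem stmt0 (n : ℕ) (hn : 0 < n) :
    ∑ i ∈ Finset.Icc (-(n : ℤ)) n, ∑ j ∈ Finset.Icc (-(n : ℤ)) n,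
      (C (2 * n) (n + i) : ℤ) * C (2 * n) (n + j) * |i ^ 2 - j ^ 2|
    = 2 * n ^ 2 * ((2 * n).choose n) ^ 2 := by
  open Finset BO in
  have hmap : Finset.Icc (-(n : ℤ)) n
      = (Finset.range (2 * n + 1)).map (⟨fun k : ℕ => (k : ℤ) - n, by
        have hinj : Function.Injective (fun k : ℕ => (k : ℤ) - n) := fun a b h => by simpa using h
        exact hinj⟩ : ℕ ↪ ℤ) := by
    ext x
    simp only [Finset.mem_Icc, Finset.mem_map, Finset.mem_range, Function.Embedding.coeFn_mk]
    constructor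
    · rintro ⟨h1, h2⟩
      exact ⟨(x + n).toNat, by omega, by omega⟩
    · rintro ⟨k, hk, rfl⟩
      omega
  have hC : ∀ k : ℕ, (C (2 * n) ((n : ℤ) + ((k : ℤ) - n)) : ℤ) = BO.f n k := by
    intro k
    have h : (n : ℤ) + ((k : ℤ) - n) = (k : ℤ) := by ring
    rw [h]
    simp [C, BO.f]
  rw [hmap]
  simp only [Finset.sum_map, Function.Embedding.coeFn_mk]
  have hterm : ∀ k ∈ Finset.range (2 * n + 1), ∀ l ∈ Finset.range (2 * n + 1),
      (C (2 * n) ((n : ℤ) + ((k : ℤ) - n)) : ℤ) * (C (2 * n) ((n : ℤ) + ((l : ℤ) - n)) : ℤ)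
        * |((k : ℤ) - n) ^ 2 - ((l : ℤ) - n) ^ 2|
      = BO.f n k * BO.f n l * (BO.w n k + BO.w n l - 2 * min (BO.w n k) (BO.w n l)) := by
    intro k _ l _
    rw [hC k, hC l]
    have habs : |BO.w n k - BO.w n l| = BO.w n k + BO.w n l - 2 * min (BO.w n k) (BO.w n l) := by
      rcases le_total (BO.w n k) (BO.w n l) with h | h
      · rw [min_eq_left h, abs_of_nonpos (by omega)]; ring
      · rw [min_eq_right h, abs_of_nonneg (by omega)]; ring
    rw [show |((k : ℤ) - n) ^ 2 - ((l : ℤ) - n) ^ 2| = |BO.w n k - BO.w n l| from rfl, habs]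
  rw [Finset.sum_congr rfl (fun k hk => Finset.sum_congr rfl (fun l hl => hterm k hk l hl))]
  -- split the double sum into three parts
  have hsplit : ∀ k ∈ Finset.range (2 * n + 1),
      ∑ l ∈ Finset.range (2 * n + 1),
        BO.f n k * BO.f n l * (BO.w n k + BO.w n l - 2 * min (BO.w n k) (BO.w n l))
      = (∑ l ∈ Finset.range (2 * n + 1), BO.f n k * BO.f n l * BO.w n k)
        + (∑ l ∈ Finset.range (2 * n + 1), BO.f n k * BO.f n l * BO.w n l)
        - (∑ l ∈ Finset.range (2 * n + 1),
            2 * (BO.f n k * BO.f n l * min (BO.w n k) (BO.w n l))) := by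
    intro k _
    rw [← Finset.sum_add_distrib, ← Finset.sum_sub_distrib]
    apply Finset.sum_congr rfl
    intro l _
    ring
  rw [Finset.sum_congr rfl hsplit, Finset.sum_sub_distrib, Finset.sum_add_distrib]
  have h1 : ∑ k ∈ Finset.range (2 * n + 1), ∑ l ∈ Finset.range (2 * n + 1),
      BO.f n k * BO.f n l * BO.w n k
      = (∑ k ∈ Finset.range (2 * n + 1), BO.f n k * BO.w n k)
        * (∑ k ∈ Finset.range (2 * n + 1), BO.f n k) := by
    rw [Finset.sum_mul]
    apply Finset.sum_congr rfl
    intro k _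
    rw [Finset.mul_sum]
    apply Finset.sum_congr rfl
    intro l _
    ring
  have h2 : ∑ k ∈ Finset.range (2 * n + 1), ∑ l ∈ Finset.range (2 * n + 1),
      BO.f n k * BO.f n l * BO.w n l
      = (∑ k ∈ Finset.range (2 * n + 1), BO.f n k)
        * (∑ k ∈ Finset.range (2 * n + 1), BO.f n k * BO.w n k) := by
    rw [Finset.sum_mul]
    apply Finset.sum_congr rfl
    intro k _
    rw [Finset.mul_sum]
    apply Finset.sum_congr rfl
    intro l _
    ring
  have hM : ∑ k ∈ Finset.range (2 * n + 1), ∑ l ∈ Finset.range (2 * n + 1),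
      2 * (BO.f n k * BO.f n l * min (BO.w n k) (BO.w n l))
      = 8 * ∑ t ∈ Finset.range n, (2 * (t : ℤ) + 1) * (BO.E n t) ^ 2 := by
    have hin : ∀ k ∈ Finset.range (2 * n + 1), ∀ l ∈ Finset.range (2 * n + 1),
        2 * (BO.f n k * BO.f n l * min (BO.w n k) (BO.w n l))
        = ∑ t ∈ Finset.range n, (2 * (t : ℤ) + 1) *
            ((BO.f n k * (if k + t + 1 ≤ n ∨ n + t + 1 ≤ k then 1 else 0))
              * (BO.f n l * (if l + t + 1 ≤ n ∨ n + t + 1 ≤ l then 1 else 0))) * 2 := by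
      intro k hk l hl
      rw [BO.min_decomp n k l hn (Finset.mem_range.mp hk) (Finset.mem_range.mp hl),
        Finset.mul_sum, Finset.mul_sum]
      apply Finset.sum_congr rfl
      intro t _
      ring
    rw [Finset.sum_congr rfl (fun k hk => Finset.sum_congr rfl (fun l hl => hin k hk l hl))]
    rw [Finset.sum_congr rfl (fun k _ => Finset.sum_comm (s := Finset.range (2 * n + 1))
        (t := Finset.range n)), Finset.sum_comm, Finset.mul_sum]
    apply Finset.sum_congr rfl
    intro t _
    have inner1 : ∀ k ∈ Finset.range (2 * n + 1),
        ∑ l ∈ Finset.range (2 * n + 1), (2 * (t : ℤ) + 1) *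
            ((BO.f n k * (if k + t + 1 ≤ n ∨ n + t + 1 ≤ k then 1 else 0))
              * (BO.f n l * (if l + t + 1 ≤ n ∨ n + t + 1 ≤ l then 1 else 0))) * 2
        = (2 * (t : ℤ) + 1) *
            ((BO.f n k * (if k + t + 1 ≤ n ∨ n + t + 1 ≤ k then 1 else 0)) * (2 * BO.E n t)) * 2 := by
      intro k _
      rw [← BO.half n t, Finset.mul_sum, Finset.mul_sum, Finset.sum_mul]
    rw [Finset.sum_congr rfl inner1]
    have inner2 : ∑ k ∈ Finset.range (2 * n + 1), (2 * (t : ℤ) + 1) *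
          ((BO.f n k * (if k + t + 1 ≤ n ∨ n + t + 1 ≤ k then 1 else 0)) * (2 * BO.E n t)) * 2
        = ((2 * (t : ℤ) + 1) * (2 * BO.E n t) * 2) *
            ∑ k ∈ Finset.range (2 * n + 1),
              BO.f n k * (if k + t + 1 ≤ n ∨ n + t + 1 ≤ k then 1 else 0) := by
      rw [Finset.mul_sum]
      apply Finset.sum_congr rfl
      intro k _
      ring
    rw [inner2, BO.half n t]
    ring
  rw [h1, h2, hM, BO.fsum n, BO.Xval n hn]
  have hfw := BO.fw n hn
  have h4 : (4 : ℤ) ^ n = 4 * 4 ^ (n - 1) := by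
    obtain ⟨m, rfl⟩ : ∃ m, n = m + 1 := ⟨n - 1, by omega⟩
    rw [Nat.add_sub_cancel, pow_succ]
    ring
  have hcen : (((2 * n).choose n : ℕ) : ℤ) = 2 * BO.p n 0 := by
    have h := BO.central n hn
    simp only [BO.p, Nat.add_zero]
    exact_mod_cast h
  linear_combination ((4 : ℤ) ^ n) * hfw
    + (8 * (n : ℤ) * ((4 : ℤ) ^ (n - 1)) + (n : ℤ) * ((4 : ℤ) ^ n - 4 * ((4 : ℤ) ^ (n - 1)))) * h4
    - (8 * (n : ℤ) ^ 2 * (BO.p n 0)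
        + 2 * (n : ℤ) ^ 2 * ((((2 * n).choose n : ℕ) : ℤ) - 2 * (BO.p n 0))) * hcen
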